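/- Let 𝒟 : ℐ → AC be a geometric diagram of acyclic categories. Then the relation ∼ on the disjoint union of morphism sets ⨆_{X ∈ Ob ℐ} Mor(𝒟(X)), defined by x ∼ y iff there exist Z ∈ Ob(ℐ), a morphism z ∈ Mor(𝒟(Z)), and morphisms f_X : Z → X, f_Y : Z → Y in ℐ with 𝒟(f_X)(z) = x and 𝒟(f_Y)(z) = y, is an equivalence relation. -/

import Mathlib

open CategoryTheory

/-!
STATEMENT 6: For a geometric diagram 𝒟 : ℐ → AC of acyclic categories, the relation ∼
on ⨆_X Mor(𝒟(X)) (x ∼ y iff they have a common preimage z under the diagram maps) is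
an equivalence relation.
-/

universe v u

def IsAcyclicCat (C : Type*) [Category C] : Prop :=
  (∀ (x : C) (f : x ⟶ x), f = 𝟙 x) ∧ ∀ x y : C, (x ⟶ y) → (y ⟶ x) → x = y

abbrev MorOf (C : Type*) [Category C] := Σ x y : C, x ⟶ y

def Indecomp {C : Type*} [Category C] (m : MorOf C) : Prop :=
  m.1 ≠ m.2.1 ∧
  ∀ (z : C) (f : m.1 ⟶ z) (g : z ⟶ m.2.1), f ≫ g = m.2.2 → z = m.1 ∨ z = m.2.1

/-- Application of the functor `𝒟(f)` to a bundled morphism. -/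
def mapMor {I : Type u} [Category.{v} I] (D : I ⥤ Cat.{v, u}) {X Y : I} (f : X ⟶ Y)
    (m : MorOf (D.obj X)) : MorOf (D.obj Y) :=
  ⟨(D.map f).toFunctor.obj m.1, (D.map f).toFunctor.obj m.2.1, (D.map f).toFunctor.map m.2.2⟩

/-- A geometric diagram of acyclic categories (Definition 4.2 of the paper):
(i) every 𝒟(X) is ranked and every 𝒟(f) is rank-preserving; (ii) every morphism x of
every 𝒟(X) admits a universal lift x̂. -/
def IsGeometric {I : Type u} [Category.{v} I] (D : I ⥤ Cat.{v, u}) : Prop :=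
  (∃ rk : ∀ X : I, (D.obj X) → ℕ,
      (∀ X : I, (∃ x₀ : D.obj X, rk X x₀ = 0) ∧
        ∀ m : MorOf (D.obj X), Indecomp m → rk X m.2.1 = rk X m.1 + 1) ∧
      (∀ (X Y : I) (f : X ⟶ Y) (x : D.obj X), rk Y ((D.map f).toFunctor.obj x) = rk X x)) ∧
  (∀ (X : I) (x : MorOf (D.obj X)),
      ∃ (Xh : I) (f : Xh ⟶ X) (xh : MorOf (D.obj Xh)),
        mapMor D f xh = x ∧
        ∀ (Y : I) (g : Y ⟶ X) (y : MorOf (D.obj Y)), mapMor D g y = x →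
          ∃ gh : Xh ⟶ Y, mapMor D gh xh = y)

/-- The relation ∼ on the disjoint union of the morphism sets of the 𝒟(X). -/
def morRel {I : Type u} [Category.{v} I] (D : I ⥤ Cat.{v, u}) :
    (Σ X : I, MorOf (D.obj X)) → (Σ X : I, MorOf (D.obj X)) → Prop :=
  fun a b =>
    ∃ (Z : I) (z : MorOf (D.obj Z)) (f : Z ⟶ a.1) (g : Z ⟶ b.1),
      mapMor D f z = a.2 ∧ mapMor D g z = b.2


lemma mapMor_id {I : Type u} [Category.{v} I] (D : I ⥤ Cat.{v, u}) {X : I}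
    (m : MorOf (D.obj X)) : mapMor D (𝟙 X) m = m := by
  unfold mapMor; rw [D.map_id]; rfl

lemma mapMor_comp {I : Type u} [Category.{v} I] (D : I ⥤ Cat.{v, u}) {X Y Z : I}
    (f : X ⟶ Y) (g : Y ⟶ Z) (m : MorOf (D.obj X)) :
    mapMor D (f ≫ g) m = mapMor D g (mapMor D f m) := by
  unfold mapMor; rw [D.map_comp]; rfl

theorem stmt6 {I : Type u} [Category.{v} I] (hI : IsAcyclicCat I)
    (D : I ⥤ Cat.{v, u}) (hD : ∀ X : I, IsAcyclicCat (D.obj X))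
    (hgeom : IsGeometric D) :
    Equivalence (morRel D) := by
  constructor
  · intro ⟨X, x⟩
    exact ⟨X, x, 𝟙 X, 𝟙 X, mapMor_id D x, mapMor_id D x⟩
  · rintro a b ⟨Z, z, f, g, hf, hg⟩
    exact ⟨Z, z, g, f, hg, hf⟩
  · rintro ⟨X, x⟩ ⟨Y, y⟩ ⟨W, w⟩ ⟨Z, z, f, g, hf, hg⟩ ⟨Z', z', f', g', hf', hg'⟩
    obtain ⟨Yh, p, yh, hyh, huniv⟩ := hgeom.2 Y y
    obtain ⟨q, hq⟩ := huniv Z g z hg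
    obtain ⟨q', hq'⟩ := huniv Z' f' z' hf'
    refine ⟨Yh, yh, q ≫ f, q' ≫ g', ?_, ?_⟩
    · rw [mapMor_comp, hq, hf]
    · rw [mapMor_comp, hq', hg']
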